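/- Let $c \in (-1,1]$ and define $a_0 := \tfrac{1}{2}\big(1 + c + \sqrt{4(1-c) + (1+c)^2}\big)$. Suppose $\{c_k\}_{k\ge 1} \subseteq (-1,1]$ with $c_1 = c$ in the recursion $a_{k+1} := \tfrac{1}{2}\big(1 + c_{k+1} + \sqrt{4a_k^2 + (1-c_{k+1})^2}\big)$. Then for all $k \ge 0$, $a_k + \tfrac{c_{k+1}+1}{2} \le a_{k+1} \le a_k + 1$, and consequently $\tfrac{1}{2}\big(k + a_0 + s_k\big) \le a_k \le k + a_0$, where $s_k := \sum_{i=1}^k c_i$. -/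

import Mathlib

/-- Bounds on the step-size recursion `a_{k+1} = (1 + c_{k+1} + √(4 a_k² + (1-c_{k+1})²))/2`
with `a₀ = (1 + c₀ + √(4(1-c₀) + (1+c₀)²))/2` and `c_k ∈ (-1, 1]`. -/
theorem stepsize_recursion_bounds (c a : ℕ → ℝ)
    (hc : ∀ k, c k ∈ Set.Ioc (-1:ℝ) 1)
    (ha0 : a 0 = (1 + c 0 + Real.sqrt (4 * (1 - c 0) + (1 + c 0)^2)) / 2)
    (harec : ∀ k, a (k+1) = (1 + c (k+1) + Real.sqrt (4 * (a k)^2 + (1 - c (k+1))^2)) / 2) :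
    (∀ k, a k + (c (k+1) + 1) / 2 ≤ a (k+1) ∧ a (k+1) ≤ a k + 1) ∧
    (∀ k : ℕ, ((k : ℝ) + a 0 + ∑ i ∈ Finset.Icc 1 k, c i) / 2 ≤ a k ∧
      a k ≤ (k : ℝ) + a 0) := by
  have hpos : ∀ k, 0 ≤ a k := by
    intro k
    induction k with
    | zero =>
      rw [ha0]
      have h1 : (-1:ℝ) < c 0 := (hc 0).1
      have h2 := Real.sqrt_nonneg (4 * (1 - c 0) + (1 + c 0)^2)
      linarith
    | succ n ih =>
      rw [harec]
      have h1 : (-1:ℝ) < c (n+1) := (hc (n+1)).1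
      have h2 := Real.sqrt_nonneg (4 * (a n)^2 + (1 - c (n+1))^2)
      linarith
  have hstep : ∀ k, a k + (c (k+1) + 1) / 2 ≤ a (k+1) ∧ a (k+1) ≤ a k + 1 := by
    intro k
    have h1 : (-1:ℝ) < c (k+1) := (hc (k+1)).1
    have h2 : c (k+1) ≤ 1 := (hc (k+1)).2
    have hak := hpos k
    constructor
    · rw [harec]
      have hle : 2 * a k ≤ Real.sqrt (4 * (a k)^2 + (1 - c (k+1))^2) := by
        have := Real.sqrt_le_sqrt (show (2 * a k)^2 ≤ 4 * (a k)^2 + (1 - c (k+1))^2 by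
          nlinarith [sq_nonneg (1 - c (k+1))])
        rwa [Real.sqrt_sq (by linarith)] at this
      linarith
    · rw [harec]
      have hle : Real.sqrt (4 * (a k)^2 + (1 - c (k+1))^2) ≤ 2 * a k + (1 - c (k+1)) := by
        have := Real.sqrt_le_sqrt (show 4 * (a k)^2 + (1 - c (k+1))^2
            ≤ (2 * a k + (1 - c (k+1)))^2 by nlinarith)
        rwa [Real.sqrt_sq (by nlinarith)] at this
      linarith
  refine ⟨hstep, ?_⟩
  intro k
  induction k with
  | zero => simp [hpos 0]
  | succ n ih =>
    obtain ⟨il, iu⟩ := ih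
    obtain ⟨sl, su⟩ := hstep n
    rw [Finset.sum_Icc_succ_top (by omega : 1 ≤ n + 1)]
    push_cast
    constructor <;> linarith
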